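/- Let (P_s)_{s≥0} be a family of Markov transition operators on bounded measurable functions on ℝ^m, and suppose there exist β > 0 and C ≥ 0 such that for every bounded Lipschitz function φ : ℝ^m → ℝ and all y, z ∈ ℝ^m, s ≥ 0: |P_s φ(y) - P_s φ(z)| ≤ Lip(φ) C e^{-β s/2} (1 + |y| + |z|). If μ and ν are two invariant probability measures for (P_s) with finite first moments, then μ = ν. -/

import Mathlib

open MeasureTheory

theorem stmt_12 (m : ℕ)
    (P : ℝ → (EuclideanSpace ℝ (Fin m) → ℝ) → (EuclideanSpace ℝ (Fin m) → ℝ))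
    (β C : ℝ) (hβ : 0 < β) (hC : 0 ≤ C)
    (hcontr : ∀ (φ : EuclideanSpace ℝ (Fin m) → ℝ) (L : NNReal),
      LipschitzWith L φ → (∃ M, ∀ x, |φ x| ≤ M) →
      ∀ (y z : EuclideanSpace ℝ (Fin m)) (s : ℝ), 0 ≤ s →
        |P s φ y - P s φ z| ≤ (L : ℝ) * C * Real.exp (-β * s / 2) * (1 + ‖y‖ + ‖z‖))
    (μ ν : Measure (EuclideanSpace ℝ (Fin m)))
    [IsProbabilityMeasure μ] [IsProbabilityMeasure ν]
    (hμ1 : Integrable (fun z => ‖z‖) μ) (hν1 : Integrable (fun z => ‖z‖) ν)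
    (hμinv : ∀ s : ℝ, 0 ≤ s → ∀ (φ : EuclideanSpace ℝ (Fin m) → ℝ),
      Measurable φ → (∃ M, ∀ x, |φ x| ≤ M) → ∫ y, P s φ y ∂μ = ∫ y, φ y ∂μ)
    (hνinv : ∀ s : ℝ, 0 ≤ s → ∀ (φ : EuclideanSpace ℝ (Fin m) → ℝ),
      Measurable φ → (∃ M, ∀ x, |φ x| ≤ M) → ∫ y, P s φ y ∂ν = ∫ y, φ y ∂ν) :
    μ = ν := by
  -- abbreviations for first moments
  set Mμ : ℝ := ∫ y, ‖y‖ ∂μ with hMμ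
  set Mν : ℝ := ∫ y, ‖y‖ ∂ν with hMν
  have hMμ0 : 0 ≤ Mμ := integral_nonneg fun y => norm_nonneg y
  have hMν0 : 0 ≤ Mν := integral_nonneg fun y => norm_nonneg y
  -- Step 1: all bounded Lipschitz functions have equal integrals.
  have key : ∀ (φ : EuclideanSpace ℝ (Fin m) → ℝ) (L : NNReal), LipschitzWith L φ → (∃ M, ∀ x, |φ x| ≤ M) →
      ∫ x, φ x ∂μ = ∫ x, φ x ∂ν := by
    intro φ L hL hbdd
    obtain ⟨M, hM⟩ := hbdd
    by_contra hne
    set a := ∫ x, φ x ∂μ with ha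
    set b := ∫ x, φ x ∂ν with hb
    set c : ℝ := (a + b) / 2 with hc
    set ψ : EuclideanSpace ℝ (Fin m) → ℝ := fun x => φ x - c with hψ
    have hψL : LipschitzWith L ψ := by
      apply LipschitzWith.of_dist_le_mul
      intro x y
      have := hL.dist_le_mul x y
      simpa [ψ, Real.dist_eq, sub_sub_sub_cancel_right] using this
    have hψmeas : Measurable ψ := hψL.continuous.measurable
    have hψbdd : ∀ x, |ψ x| ≤ M + |c| := fun x =>
      (abs_sub (φ x) c).trans (add_le_add (hM x) le_rfl)
    have hφmeas : Measurable φ := hL.continuous.measurable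
    have hφint_μ : Integrable φ μ :=
      (integrable_const M).mono' hφmeas.aestronglyMeasurable
        (Filter.Eventually.of_forall fun x => by simpa [Real.norm_eq_abs] using hM x)
    have hφint_ν : Integrable φ ν :=
      (integrable_const M).mono' hφmeas.aestronglyMeasurable
        (Filter.Eventually.of_forall fun x => by simpa [Real.norm_eq_abs] using hM x)
    set d : ℝ := (a - b) / 2 with hd
    have hdne : d ≠ 0 := by
      simp only [hd, div_ne_zero_iff, sub_ne_zero]
      exact ⟨hne, by norm_num⟩
    have hdpos : 0 < |d| := abs_pos.mpr hdne
    have hintψμ : ∫ x, ψ x ∂μ = d := by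
      simp only [ψ]
      rw [integral_sub hφint_μ (integrable_const c), integral_const]
      simp [← ha, hc, hd, measure_univ]
      ring
    have hintψν : ∫ x, ψ x ∂ν = -d := by
      simp only [ψ]
      rw [integral_sub hφint_ν (integrable_const c), integral_const]
      simp [← hb, hc, hd, measure_univ]
      ring
    -- choose a large time s
    have htend : Filter.Tendsto (fun s : ℝ => (L : ℝ) * C * Real.exp (-β * s / 2) * (2 + Mμ + Mν))
        Filter.atTop (nhds 0) := by
      have h1 : Filter.Tendsto (fun s : ℝ => -β * s / 2) Filter.atTop Filter.atBot := by
        apply Filter.Tendsto.atBot_div_const (by norm_num : (0:ℝ) < 2)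
        exact Filter.tendsto_id.const_mul_atTop_of_neg (by linarith)
      have h2 := Real.tendsto_exp_atBot.comp h1
      have := (h2.const_mul ((L : ℝ) * C)).mul_const (2 + Mμ + Mν)
      simpa using this
    obtain ⟨s, hs0, hslt⟩ : ∃ s : ℝ, 0 ≤ s ∧
        (L : ℝ) * C * Real.exp (-β * s / 2) * (2 + Mμ + Mν) < 2 * |d| := by
      have hev := htend.eventually_lt_const (by positivity : (0:ℝ) < 2 * |d|)
      obtain ⟨s, hs⟩ := (hev.and (Filter.eventually_ge_atTop (0:ℝ))).exists
      exact ⟨s, hs.2, hs.1⟩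
    set K : ℝ := (L : ℝ) * C * Real.exp (-β * s / 2) with hK
    have hK0 : 0 ≤ K := by positivity
    have hcψ : ∀ y : EuclideanSpace ℝ (Fin m), |P s ψ y - P s ψ 0| ≤ K * (1 + ‖y‖) := by
      intro y
      have := hcontr ψ L hψL ⟨M + |c|, hψbdd⟩ y 0 s hs0
      simpa [hK, norm_zero] using this
    have hinvμ := hμinv s hs0 ψ hψmeas ⟨M + |c|, hψbdd⟩
    have hinvν := hνinv s hs0 ψ hψmeas ⟨M + |c|, hψbdd⟩
    by_cases hIμ : Integrable (P s ψ) μ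
    · by_cases hIν : Integrable (P s ψ) ν
      · -- both integrable: contraction estimate
        have hboundμ : |∫ y, P s ψ y ∂μ - P s ψ 0| ≤ K * (1 + Mμ) := by
          have heq : ∫ y, P s ψ y ∂μ - P s ψ 0 = ∫ y, (P s ψ y - P s ψ 0) ∂μ := by
            rw [integral_sub hIμ (integrable_const _), integral_const]
            simp [measure_univ]
          rw [heq]
          have h1 : |∫ y, (P s ψ y - P s ψ 0) ∂μ| ≤ ∫ y, |P s ψ y - P s ψ 0| ∂μ := by
            simpa [Real.norm_eq_abs] using
              norm_integral_le_integral_norm (μ := μ) (f := fun y => P s ψ y - P s ψ 0)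
          refine h1.trans ?_
          have hint1 : Integrable (fun y : EuclideanSpace ℝ (Fin m) => |P s ψ y - P s ψ 0|) μ :=
            (hIμ.sub (integrable_const _)).abs
          have hint2 : Integrable (fun y : EuclideanSpace ℝ (Fin m) => K * (1 + ‖y‖)) μ :=
            ((integrable_const (1:ℝ)).add hμ1).const_mul K
          calc ∫ y, |P s ψ y - P s ψ 0| ∂μ ≤ ∫ y, K * (1 + ‖y‖) ∂μ :=
                integral_mono hint1 hint2 fun y => hcψ y
            _ = K * (1 + Mμ) := by
                rw [integral_const_mul, integral_add (integrable_const _) hμ1, integral_const]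
                simp [measure_univ, hMμ]
        have hboundν : |∫ y, P s ψ y ∂ν - P s ψ 0| ≤ K * (1 + Mν) := by
          have heq : ∫ y, P s ψ y ∂ν - P s ψ 0 = ∫ y, (P s ψ y - P s ψ 0) ∂ν := by
            rw [integral_sub hIν (integrable_const _), integral_const]
            simp [measure_univ]
          rw [heq]
          have h1 : |∫ y, (P s ψ y - P s ψ 0) ∂ν| ≤ ∫ y, |P s ψ y - P s ψ 0| ∂ν := by
            simpa [Real.norm_eq_abs] using
              norm_integral_le_integral_norm (μ := ν) (f := fun y => P s ψ y - P s ψ 0)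
          refine h1.trans ?_
          have hint1 : Integrable (fun y : EuclideanSpace ℝ (Fin m) => |P s ψ y - P s ψ 0|) ν :=
            (hIν.sub (integrable_const _)).abs
          have hint2 : Integrable (fun y : EuclideanSpace ℝ (Fin m) => K * (1 + ‖y‖)) ν :=
            ((integrable_const (1:ℝ)).add hν1).const_mul K
          calc ∫ y, |P s ψ y - P s ψ 0| ∂ν ≤ ∫ y, K * (1 + ‖y‖) ∂ν :=
                integral_mono hint1 hint2 fun y => hcψ y
            _ = K * (1 + Mν) := by
                rw [integral_const_mul, integral_add (integrable_const _) hν1, integral_const]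
                simp [measure_univ, hMν]
        have h2d : 2 * |d| = |(∫ y, P s ψ y ∂μ) - (∫ y, P s ψ y ∂ν)| := by
          rw [hinvμ, hinvν, hintψμ, hintψν, sub_neg_eq_add, ← two_mul, abs_mul, abs_two]
        have h3 : |(∫ y, P s ψ y ∂μ) - (∫ y, P s ψ y ∂ν)| ≤ K * (2 + Mμ + Mν) := by
          calc |(∫ y, P s ψ y ∂μ) - (∫ y, P s ψ y ∂ν)|
              ≤ |∫ y, P s ψ y ∂μ - P s ψ 0| + |∫ y, P s ψ y ∂ν - P s ψ 0| := by
                have : (∫ y, P s ψ y ∂μ) - (∫ y, P s ψ y ∂ν) =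
                    (∫ y, P s ψ y ∂μ - P s ψ 0) - (∫ y, P s ψ y ∂ν - P s ψ 0) := by ring
                rw [this]
                exact abs_sub _ _
            _ ≤ K * (1 + Mμ) + K * (1 + Mν) := add_le_add hboundμ hboundν
            _ = K * (2 + Mμ + Mν) := by ring
        rw [h2d] at hslt
        exact absurd (h3.trans_lt hslt) (lt_irrefl _)
      · rw [integral_undef hIν, hintψν] at hinvν
        exact hdne (by linarith [hinvν] : d = 0)
    · rw [integral_undef hIμ, hintψμ] at hinvμ
      exact hdne hinvμ.symm
  -- Step 2: equal integrals of bounded Lipschitz functions imply equal measures.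
  have hclosed : ∀ F : Set (EuclideanSpace ℝ (Fin m)), IsClosed F → μ F = ν F := by
    intro F hF
    rcases F.eq_empty_or_nonempty with rfl | hFne
    · simp
    -- Lipschitz approximations to the indicator of F
    set f : ℕ → EuclideanSpace ℝ (Fin m) → ℝ := fun n x => max (1 - (n + 1 : ℝ) * Metric.infDist x F) 0 with hf
    have hflip : ∀ n : ℕ, LipschitzWith ((n : NNReal) + 1) (f n) := by
      intro n
      apply LipschitzWith.of_dist_le_mul
      intro x y
      have hinf : |Metric.infDist x F - Metric.infDist y F| ≤ dist x y := by
        have := (Metric.lipschitz_infDist_pt (s := F)).dist_le_mul x y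
        simpa [Real.dist_eq] using this
      have h1 : dist (f n x) (f n y) ≤
          |(1 - (n + 1 : ℝ) * Metric.infDist x F) - (1 - (n + 1 : ℝ) * Metric.infDist y F)| := by
        rw [Real.dist_eq]
        exact abs_max_sub_max_le_abs _ _ _
      refine h1.trans ?_
      have h2 : |(1 - (n + 1 : ℝ) * Metric.infDist x F) - (1 - (n + 1 : ℝ) * Metric.infDist y F)|
          = (n + 1 : ℝ) * |Metric.infDist x F - Metric.infDist y F| := by
        rw [show (1 - (n + 1 : ℝ) * Metric.infDist x F) - (1 - (n + 1 : ℝ) * Metric.infDist y F)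
            = (n + 1 : ℝ) * (Metric.infDist y F - Metric.infDist x F) by ring,
          abs_mul, abs_of_nonneg (by positivity : (0:ℝ) ≤ (n + 1 : ℝ)), abs_sub_comm]
      rw [h2]
      have hn : ((((n : NNReal) + 1) : NNReal) : ℝ) = (n + 1 : ℝ) := by push_cast; ring
      rw [hn]
      exact mul_le_mul_of_nonneg_left hinf (by positivity)
    have hfbdd : ∀ n x, |f n x| ≤ 1 := by
      intro n x
      rw [abs_le]
      constructor
      · exact le_trans (by norm_num) (le_max_right _ _)
      · apply max_le _ zero_le_one
        have : 0 ≤ (n + 1 : ℝ) * Metric.infDist x F :=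
          mul_nonneg (by positivity) Metric.infDist_nonneg
        linarith
    have hfeq : ∀ n, ∫ x, f n x ∂μ = ∫ x, f n x ∂ν := fun n =>
      key (f n) ((n : NNReal) + 1) (hflip n) ⟨1, hfbdd n⟩
    -- pointwise convergence to the indicator
    have hlim : ∀ x : EuclideanSpace ℝ (Fin m), Filter.Tendsto (fun n => f n x) Filter.atTop
        (nhds (F.indicator (fun _ => (1:ℝ)) x)) := by
      intro x
      by_cases hx : x ∈ F
      · have : ∀ n, f n x = 1 := by
          intro n
          have : Metric.infDist x F = 0 := Metric.infDist_zero_of_mem hx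
          simp [hf, this]
        simp only [Set.indicator_of_mem hx]
        simpa [this] using tendsto_const_nhds (x := (1:ℝ)) (f := Filter.atTop (α := ℕ))
      · have hpos : 0 < Metric.infDist x F := (hF.notMem_iff_infDist_pos hFne).mp hx
        have hev : ∀ᶠ n : ℕ in Filter.atTop, f n x = 0 := by
          obtain ⟨N, hN⟩ := exists_nat_gt (1 / Metric.infDist x F)
          filter_upwards [Filter.eventually_ge_atTop N] with n hn
          have h1 : 1 / Metric.infDist x F < (n + 1 : ℝ) := by
            have : (N : ℝ) ≤ n := by exact_mod_cast hn
            linarith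
          have h2 : 1 < (n + 1 : ℝ) * Metric.infDist x F := by
            rw [div_lt_iff₀ hpos] at h1
            linarith
          simp only [hf]
          rw [max_eq_right]
          linarith
        simp only [Set.indicator_of_notMem hx]
        exact Filter.Tendsto.congr' (hev.mono fun n h => h.symm) tendsto_const_nhds
    -- dominated convergence for both measures
    have hdctμ : Filter.Tendsto (fun n => ∫ x, f n x ∂μ) Filter.atTop
        (nhds (∫ x, F.indicator (fun _ => (1:ℝ)) x ∂μ)) := by
      apply tendsto_integral_of_dominated_convergence (fun _ => (1:ℝ))
      · exact fun n => ((hflip n).continuous.measurable).aestronglyMeasurable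
      · exact integrable_const 1
      · exact fun n => Filter.Eventually.of_forall fun x => by
          simpa [Real.norm_eq_abs] using hfbdd n x
      · exact Filter.Eventually.of_forall hlim
    have hdctν : Filter.Tendsto (fun n => ∫ x, f n x ∂ν) Filter.atTop
        (nhds (∫ x, F.indicator (fun _ => (1:ℝ)) x ∂ν)) := by
      apply tendsto_integral_of_dominated_convergence (fun _ => (1:ℝ))
      · exact fun n => ((hflip n).continuous.measurable).aestronglyMeasurable
      · exact integrable_const 1
      · exact fun n => Filter.Eventually.of_forall fun x => by
          simpa [Real.norm_eq_abs] using hfbdd n x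
      · exact Filter.Eventually.of_forall hlim
    simp_rw [hfeq] at hdctμ
    have hind : ∫ x, F.indicator (fun _ => (1:ℝ)) x ∂μ = ∫ x, F.indicator (fun _ => (1:ℝ)) x ∂ν :=
      tendsto_nhds_unique hdctμ hdctν
    rw [integral_indicator_const (1:ℝ) hF.measurableSet,
        integral_indicator_const (1:ℝ) hF.measurableSet] at hind
    simp only [smul_eq_mul, mul_one] at hind
    exact (ENNReal.toReal_eq_toReal_iff' (measure_ne_top μ F) (measure_ne_top ν F)).mp hind
  -- conclude via the π-system of closed sets
  apply MeasureTheory.ext_of_generate_finite _ ?_ isPiSystem_isClosed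
  · exact fun F hFc => hclosed F hFc
  · exact hclosed Set.univ isClosed_univ
  · rw [BorelSpace.measurable_eq (α := EuclideanSpace ℝ (Fin m)), borel_eq_generateFrom_isClosed]
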